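/- arXiv:1906.03759 — 2 statements merged into one kernel-verified Lean document; each statement's English description precedes it below -/
import Mathlib

section
/- Let N, M be positive integers with 2M ≤ N, let U, D, U', D' ⊆ {1,…,M} satisfy U∪D = U'∪D', U∩D = U'∩D' and 1 ∉ U∪D (hence 1 ∉ U'∪D'), and let β ∈ {2,…,M}∖(U∪D). Write W̄ := {N+1−w : w∈W}, 1U := U∪{1}, 1D := D∪{1}, βD := D∪{β}, 1βD := D∪{1,β}. Then the following two quantities are unchanged when (U,D) is replaced by (U',D'): (i) Δ(U∪(1D)‾)·Δ(1U∪(βD)‾) / [Δ(U∪D̄)·Δ(U∪(βD)‾)]; (ii) Δ(1U∪D̄)·Δ(U∪(1βD)‾) / [Δ(U∪D̄)·Δ(U∪(βD)‾)]. (All the sets occurring consist of distinct integers, so all the Δ's are nonzero.) -/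
open Finset

namespace Shuf

/-- A unit triangle of the triangular lattice: `(a, b, o)` where `o = false` is the
up-pointing unit triangle with vertices `(a,b), (a+1,b), (a,b+1)` (in the lattice
coordinates whose embedding is `(a,b) ↦ (a + b/2, b·√3/2)`), and `o = true` is the
down-pointing unit triangle with vertices `(a+1,b), (a,b+1), (a+1,b+1)`. -/
abbrev Tri : Type := ℤ × ℤ × Bool

/-- Adjacency from an up-pointing triangle `s` to a down-pointing triangle `t`
(sharing a unit edge). -/
def adjUD (s t : Tri) : Prop :=
  s.2.2 = false ∧ t.2.2 = true ∧
    ((t.1 = s.1 ∧ t.2.1 = s.2.1) ∨ (t.1 = s.1 - 1 ∧ t.2.1 = s.2.1) ∨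
      (t.1 = s.1 ∧ t.2.1 = s.2.1 - 1))

/-- Two unit triangles share a unit edge (form a lozenge). -/
def adj (s t : Tri) : Prop := adjUD s t ∨ adjUD t s

/-- A lozenge tiling of the region `R` with barrier edges `Bar`, encoded as the
involution pairing each unit triangle of `R` with the one it is matched to. -/
def IsTiling (R : Set Tri) (Bar : Set (Tri × Tri)) (f : Tri → Tri) : Prop :=
  (∀ t, t ∉ R → f t = t) ∧
    ∀ t ∈ R, f t ∈ R ∧ adj t (f t) ∧ f (f t) = t ∧ (t, f t) ∉ Bar ∧ (f t, t) ∉ Bar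

/-- `M R Bar` : the number of lozenge tilings of the region `R` with barriers `Bar`. -/
noncomputable def M (R : Set Tri) (Bar : Set (Tri × Tri)) : ℕ :=
  Nat.card {f : Tri → Tri // IsTiling R Bar f}

/-- 180° rotation about the point `(c.1/2, c.2/2)` (lattice coordinates). -/
def rot (c : ℤ × ℤ) (t : Tri) : Tri := (c.1 - t.1 - 1, c.2 - t.2.1 - 1, !t.2.2)

/-- `Mc c R Bar` : the number of lozenge tilings of `R` invariant under the 180°
rotation about the point `(c.1/2, c.2/2)`. -/
noncomputable def Mc (c : ℤ × ℤ) (R : Set Tri) (Bar : Set (Tri × Tri)) : ℕ :=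
  Nat.card {f : Tri → Tri // IsTiling R Bar f ∧ ∀ t, f (rot c t) = rot c (f t)}

/-- The doubly-dented hexagon whose horizontal axis (at height `0`) runs from the
west vertex `(0,0)` to the east vertex `(L,0)`, whose upper half is a trapezoid of
height `hu` and whose lower half is a trapezoid of height `hd`; the up-pointing unit
triangle just above the axis at position `i` is removed for `i ∈ U`, and the
down-pointing one just below the axis at position `i` is removed for `i ∈ D`
(positions are labelled `1,…,L` from left to right). -/
def HRegion (L hu hd : ℤ) (U D : Set ℤ) : Set Tri :=
  {t | (t.2.2 = false ∧ 0 ≤ t.2.1 ∧ t.2.1 < hu ∧ 0 ≤ t.1 ∧ t.1 + t.2.1 ≤ L - 1 ∧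
          (t.2.1 = 0 → t.1 + 1 ∉ U)) ∨
       (t.2.2 = true ∧ 0 ≤ t.2.1 ∧ t.2.1 < hu ∧ 0 ≤ t.1 ∧ t.1 + t.2.1 ≤ L - 2) ∨
       (t.2.2 = false ∧ -hd ≤ t.2.1 ∧ t.2.1 ≤ -1 ∧ -t.2.1 ≤ t.1 ∧ t.1 ≤ L - 1) ∨
       (t.2.2 = true ∧ -hd ≤ t.2.1 ∧ t.2.1 ≤ -1 ∧ -t.2.1 - 1 ≤ t.1 ∧ t.1 ≤ L - 1 ∧
          (t.2.1 = -1 → t.1 + 1 ∉ D))}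

/-- The barrier edges along the axis at the positions of `B`: the barrier at
position `i` forbids the vertical lozenge formed by the up-triangle just above and
the down-triangle just below the `i`-th unit segment of the axis. -/
def HBar (B : Set ℤ) : Set (Tri × Tri) :=
  {e | ∃ i ∈ B, e = ((i - 1, 0, false), (i - 1, -1, true)) ∨
                 e = ((i - 1, -1, true), (i - 1, 0, false))}

/-- `MH x y U D B` : the number of lozenge tilings of the doubly-dented hexagon
`H_{x,y}(U; D; B)`. -/
noncomputable def MH (x y : ℕ) (U D B : Finset ℤ) : ℕ :=
  M (HRegion (x + y + (U ∪ D).card) (y + U.card) (y + D.card) ↑U ↑D) (HBar ↑B)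

/-- `mir N W = {N + 1 - w : w ∈ W}`, the reflection of an index set. -/
def mir (N : ℤ) (W : Finset ℤ) : Finset ℤ := W.image (fun w => N + 1 - w)

/-- `MCS x y U D B` : the number of lozenge tilings of the centrally symmetric
doubly-dented hexagon `CS_{x,y}(U; D; B) = H_{x,y}(U ∪ D̄; D ∪ Ū; B ∪ B̄)`,
where `N = x + y + 2|U ∪ D|` and `W̄ = {N+1-w : w ∈ W}`. -/
noncomputable def MCS (x y : ℕ) (U D B : Finset ℤ) : ℕ :=
  MH x y (U ∪ mir (x + y + 2 * (U ∪ D).card) D) (D ∪ mir (x + y + 2 * (U ∪ D).card) U)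
    (B ∪ mir (x + y + 2 * (U ∪ D).card) B)

/-- `McCS x y U D B` : the number of centrally symmetric lozenge tilings of
`CS_{x,y}(U; D; B)` (tilings invariant under the 180° rotation about the center
`(N/2, 0)` of the region, `N = x + y + 2|U ∪ D|`). -/
noncomputable def McCS (x y : ℕ) (U D B : Finset ℤ) : ℕ :=
  let N : ℤ := x + y + 2 * (U ∪ D).card
  let U' : Finset ℤ := U ∪ mir N D
  let D' : Finset ℤ := D ∪ mir N U
  Mc (N, 0)
    (HRegion (x + y + (U' ∪ D').card) (y + U'.card) (y + D'.card) ↑U' ↑D')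
    (HBar ↑(B ∪ mir N B))

/-- `Δprod S = ∏_{s < s' ∈ S} (s' - s)`. -/
def Δprod (S : Finset ℤ) : ℤ :=
  ∏ p ∈ (S ×ˢ S).filter (fun p => p.1 < p.2), (p.2 - p.1)

/-- MacMahon's box formula `PP(a,b,c)`. -/
def PP (a b c : ℕ) : ℚ :=
  ∏ i ∈ Icc 1 a, ∏ j ∈ Icc 1 b, ∏ k ∈ Icc 1 c,
    (((i : ℚ) + j + k - 1) / ((i : ℚ) + j + k - 2))

/-- The hyperfactorial `H(n) = 0!·1!⋯(n-1)!`. -/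
def hyperfac (n : ℕ) : ℕ := ∏ k ∈ range n, k.factorial

/-- The Pochhammer symbol `(q)_r = q(q+1)⋯(q+r-1)`. -/
def poch (q : ℚ) (r : ℕ) : ℚ := ∏ i ∈ range r, (q + i)

/-- The dented semihexagon `T_{a,b}(S)`: the trapezoid with north side `b`, slanted
sides `a` and base `a + b` lying above the horizontal axis (base from `(0,0)` to
`(a+b,0)`), with the up-pointing unit triangles at the positions of `S` removed
from its base. -/
def TRegion (a b : ℤ) (S : Set ℤ) : Set Tri :=
  {t | (t.2.2 = false ∧ 0 ≤ t.2.1 ∧ t.2.1 < a ∧ 0 ≤ t.1 ∧ t.1 + t.2.1 ≤ a + b - 1 ∧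
          (t.2.1 = 0 → t.1 + 1 ∉ S)) ∨
       (t.2.2 = true ∧ 0 ≤ t.2.1 ∧ t.2.1 < a ∧ 0 ≤ t.1 ∧ t.1 + t.2.1 ≤ a + b - 2)}

/-- `MT a b S` : the number of lozenge tilings of `T_{a,b}(S)`. -/
noncomputable def MT (a b : ℤ) (S : Finset ℤ) : ℕ := M (TRegion a b ↑S) ∅

/-- The trapezoid with base `L` (from `(0,0)` to `(L,0)`), height `h`. -/
def trapRegion (L h : ℤ) : Set Tri :=
  {t | (t.2.2 = false ∧ 0 ≤ t.2.1 ∧ t.2.1 < h ∧ 0 ≤ t.1 ∧ t.1 + t.2.1 ≤ L - 1) ∨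
       (t.2.2 = true ∧ 0 ≤ t.2.1 ∧ t.2.1 < h ∧ 0 ≤ t.1 ∧ t.1 + t.2.1 ≤ L - 2)}

/-- The unit triangles of the up-pointing triangle of side `s` whose base runs from
`(p,0)` to `(p+s,0)` (lying above the axis). -/
def upTriSet (p : ℤ) (s : ℕ) : Set Tri :=
  {t | t.2.2 = false ∧ 0 ≤ t.2.1 ∧ p ≤ t.1 ∧ t.1 + t.2.1 ≤ p + s - 1} ∪
  {t | t.2.2 = true ∧ 0 ≤ t.2.1 ∧ p ≤ t.1 ∧ t.1 + t.2.1 ≤ p + s - 2}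

/-- The unit triangles of the down-pointing triangle of side `s` whose top edge runs
from `(p,0)` to `(p+s,0)` (lying below the axis). -/
def downTriSet (p : ℤ) (s : ℕ) : Set Tri :=
  {t | t.2.2 = true ∧ -(s : ℤ) ≤ t.2.1 ∧ t.2.1 ≤ -1 ∧ p - t.2.1 - 1 ≤ t.1 ∧ t.1 ≤ p + s - 1} ∪
  {t | t.2.2 = false ∧ -(s : ℤ) ≤ t.2.1 ∧ t.2.1 ≤ -1 ∧ p - t.2.1 ≤ t.1 ∧ t.1 ≤ p + s - 1}

/-- A triangle of side `s` along the axis starting at `p`, up- or down-pointing. -/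
def triSet (p : ℤ) (s : ℕ) (up : Bool) : Set Tri :=
  if up then upTriSet p s else downTriSet p s

/-- The removed triangles, at the dents given by a run/gap sequence
`a₁ (run), a₂ (gap), a₃ (run), …` starting at `p`. -/
def seqRemoved : ℤ → List ℕ → Set Tri
  | _, [] => ∅
  | p, [s] => upTriSet p s
  | p, s :: g :: r => upTriSet p s ∪ seqRemoved (p + s + g) r

/-- `oSum [a₁,a₂,…] = a₁ + a₃ + a₅ + ⋯`. -/
def oSum : List ℕ → ℕ
  | [] => 0
  | [s] => s
  | s :: _ :: r => s + oSum r

/-- `sFun l = s(a₁,…,a_r)` : the number of lozenge tilings of the generalized dented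
semihexagon `S(a₁,…,a_r)` (trapezoid of base `a₁+⋯+a_r` and height `a₁+a₃+⋯`, with
up-pointing triangles of sides `a₁, a₃, …` removed from its base at mutual
distances `a₂, a₄, …`, the first one touching the west vertex). -/
noncomputable def sFun (l : List ℕ) : ℕ :=
  M (trapRegion l.sum (oSum l) \ seqRemoved 0 l) ∅

/-- A fern: a chain of lattice triangles of alternating orientations along the axis,
given by the list of side-lengths and the orientation of the first triangle. -/
structure Fern where
  lengths : List ℕ
  firstUp : Bool

/-- The total length of a fern. -/
def Fern.total (F : Fern) : ℕ := F.lengths.sum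

/-- Sum of the entries at even positions if the flag is `true` (resp. odd positions
if `false`). -/
def upLenAux : Bool → List ℕ → ℕ
  | _, [] => 0
  | true, s :: r => s + upLenAux false r
  | false, _ :: r => upLenAux true r

/-- The sum of side-lengths of the up-pointing triangles of a fern. -/
def Fern.up (F : Fern) : ℕ := upLenAux F.firstUp F.lengths

/-- The sum of side-lengths of the down-pointing triangles of a fern. -/
def Fern.down (F : Fern) : ℕ := upLenAux (!F.firstUp) F.lengths

/-- The image of a fern under 180° rotation. -/
def Fern.rot (F : Fern) : Fern :=
  ⟨F.lengths.reverse, if F.lengths.length % 2 = 1 then !F.firstUp else F.firstUp⟩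

/-- Concatenation of two ferns (the second continuing the alternation of the first). -/
def Fern.cat (F G : Fern) : Fern := ⟨F.lengths ++ G.lengths, F.firstUp⟩

/-- The unit triangles of a chain of triangles of alternating orientations starting
at `p` with the first orientation `o`. -/
def chainSet : ℤ → Bool → List ℕ → Set Tri
  | _, _, [] => ∅
  | p, o, s :: r => triSet p s o ∪ chainSet (p + s) (!o) r

/-- The unit triangles of the ferns `Fs` placed along the axis starting at `p` with
gaps `ds` between consecutive ferns. -/
def fernsSet : ℤ → List Fern → List ℕ → Set Tri
  | _, [], _ => ∅
  | p, F :: Fs, ds => chainSet p F.firstUp F.lengths ∪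
      fernsSet (p + F.total + ds.headI) Fs ds.tail

def totUp (Fs : List Fern) : ℕ := (Fs.map Fern.up).sum
def totDown (Fs : List Fern) : ℕ := (Fs.map Fern.down).sum

/-- The hexagon with ferns removed `R_{x,y}(F₁,…,F_k | d₁,…,d_{k-1})`. -/
def RRegion (x y : ℕ) (Fs : List Fern) (ds : List ℕ) : Set Tri :=
  HRegion (x + y + totUp Fs + totDown Fs) (y + totUp Fs) (y + totDown Fs) ∅ ∅ \
    fernsSet 0 Fs ds

/-- The number of lozenge tilings of `R_{x,y}(F₁,…,F_k | d₁,…,d_{k-1})`. -/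
noncomputable def MR (x y : ℕ) (Fs : List Fern) (ds : List ℕ) : ℕ :=
  M (RRegion x y Fs ds) ∅

/-- The number of centrally symmetric lozenge tilings of
`R_{x,y}(F₁,…,F_k | d₁,…,d_{k-1})` (for a centrally symmetric datum; the center of
the hexagon is the midpoint `(L/2, 0)` of its axis). -/
noncomputable def McR (x y : ℕ) (Fs : List Fern) (ds : List ℕ) : ℕ :=
  Mc ((x + y + totUp Fs + totDown Fs : ℤ), 0) (RRegion x y Fs ds) ∅

/-- The positions (labelled `1,2,…` from the left) of the removed up-pointing unit
triangles just above the axis, for a chain starting at `p` with first orientation `o`. -/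
noncomputable def upRunPos : ℤ → Bool → List ℕ → Finset ℤ
  | _, _, [] => ∅
  | p, true, s :: r => Finset.Icc (p + 1) (p + s) ∪ upRunPos (p + s) false r
  | p, false, s :: r => upRunPos (p + s) true r

/-- The positions of the removed up-pointing unit triangles along the axis for the
ferns `Fs` with gaps `ds`, starting at `p`. -/
noncomputable def upPosAll : ℤ → List Fern → List ℕ → Finset ℤ
  | _, [], _ => ∅
  | p, F :: Fs, ds => upRunPos p F.firstUp F.lengths ∪
      upPosAll (p + F.total + ds.headI) Fs ds.tail

/-- The positions of the removed down-pointing unit triangles along the axis. -/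
noncomputable def downPosAll (p : ℤ) (Fs : List Fern) (ds : List ℕ) : Finset ℤ :=
  upPosAll p (Fs.map (fun F => Fern.mk F.lengths (!F.firstUp))) ds

/-- The unit triangles removed in the generalized dented semihexagon determined by
the maximal runs of the position set `A`: a unit triangle is removed precisely when
the interval of base positions it lies over is contained in `A`. -/
def runRemoved (A : Finset ℤ) : Set Tri :=
  {t | ∀ i ∈ Finset.Icc (t.1 + 1) (t.1 + t.2.1 + (if t.2.2 then 2 else 1)), i ∈ A}

/-- `MS A` : the number of lozenge tilings of the generalized dented semihexagon
`S(e₁, e₂, …)` where `e₁, e₃, …` are the lengths of the maximal runs of `A` and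
`e₂, e₄, …` the gaps between consecutive runs (base `= max A`, height `= |A|`). -/
noncomputable def MS (A : Finset ℤ) : ℕ :=
  M (trapRegion (WithBot.unbotD 0 A.max) A.card \ runRemoved A) ∅

/-- The fern list of `E_{x,y}(F₁,…,F_k | d₁,…,d_{k-1})`:
`F₁,…,F_{k-1}, F_k ∘ F̄_k, F̄_{k-1},…,F̄₁`. -/
def EFerns (Fs : List Fern) : List Fern :=
  Fs.dropLast ++ Fern.cat (Fs.getLastD ⟨[], true⟩) (Fern.rot (Fs.getLastD ⟨[], true⟩)) ::
    (Fs.dropLast.map Fern.rot).reverse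

/-- The gap list of `E_{x,y}` : `d₁,…,d_{k-1},d_{k-1},…,d₁`. -/
def Egaps (ds : List ℕ) : List ℕ := ds ++ ds.reverse

/-- The fern list of `E'_{x,y}(F₁,…,F_k | d₁,…,d_{k-1})` : `F₁,…,F_k,F̄_k,…,F̄₁`. -/
def E'Ferns (Fs : List Fern) : List Fern := Fs ++ (Fs.map Fern.rot).reverse

/-- The gap list of `E'_{x,y}` : `d₁,…,d_{k-1},1,d_{k-1},…,d₁`. -/
def E'gaps (ds : List ℕ) : List ℕ := ds ++ 1 :: ds.reverse

end Shuf

namespace Shuf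

def Pc (A B : Finset ℤ) : ℤ := ∏ a ∈ A, ∏ b ∈ B, (b - a)

lemma prod_mir (N : ℤ) (W : Finset ℤ) (f : ℤ → ℤ) :
    ∏ b ∈ mir N W, f b = ∏ w ∈ W, f (N + 1 - w) :=
  Finset.prod_image (fun x _ y _ h => by omega)

lemma mir_insert (N t : ℤ) (W : Finset ℤ) :
    mir N (insert t W) = insert (N + 1 - t) (mir N W) :=
  Finset.image_insert _ _ _

lemma Δprod_eq (S : Finset ℤ) :
    Δprod S = ∏ a ∈ S, ∏ b ∈ S, (if a < b then b - a else 1) := by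
  rw [Δprod, Finset.prod_filter, Finset.prod_product]

lemma Δprod_pos (S : Finset ℤ) : 0 < Δprod S := by
  refine Finset.prod_pos fun p hp => ?_
  have := (Finset.mem_filter.1 hp).2
  omega

lemma Δprod_union {A B : Finset ℤ} (h : ∀ a ∈ A, ∀ b ∈ B, a < b) :
    Δprod (A ∪ B) = Δprod A * Δprod B * Pc A B := by
  have hd : Disjoint A B :=
    Finset.disjoint_left.2 fun {a} ha hb => absurd (h a ha a hb) (lt_irrefl a)
  rw [Δprod_eq, Δprod_eq, Δprod_eq, Finset.prod_union hd]
  have e1 : ∀ C : Finset ℤ, (∏ a ∈ C, ∏ b ∈ A ∪ B, (if a < b then b - a else 1))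
      = (∏ a ∈ C, ∏ b ∈ A, (if a < b then b - a else 1)) *
        ∏ a ∈ C, ∏ b ∈ B, (if a < b then b - a else 1) := by
    intro C
    rw [← Finset.prod_mul_distrib]
    exact Finset.prod_congr rfl fun a _ => Finset.prod_union hd
  rw [e1, e1]
  have e2 : (∏ a ∈ A, ∏ b ∈ B, (if a < b then b - a else 1)) = Pc A B :=
    Finset.prod_congr rfl fun a ha => Finset.prod_congr rfl fun b hb => if_pos (h a ha b hb)
  have e3 : (∏ a ∈ B, ∏ b ∈ A, (if a < b then b - a else 1)) = 1 := by
    rw [Finset.prod_eq_one]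
    intro a ha
    rw [Finset.prod_eq_one]
    intro b hb
    exact if_neg (fun hab => lt_asymm (h b hb a ha) hab)
  rw [e2, e3]
  ring

lemma Δprod_insert {t : ℤ} {S : Finset ℤ} (h : ∀ s ∈ S, t < s) :
    Δprod (insert t S) = (∏ s ∈ S, (s - t)) * Δprod S := by
  rw [Finset.insert_eq, Δprod_union (by simpa using h)]
  have h1 : Δprod {t} = 1 := by simp [Δprod_eq]
  have h2 : Pc {t} S = ∏ s ∈ S, (s - t) := by simp [Pc]
  rw [h1, h2]; ring

lemma Δprod_mir (N : ℤ) (W : Finset ℤ) : Δprod (mir N W) = Δprod W := by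
  rw [Δprod_eq, Δprod_eq, prod_mir]
  have e : ∀ w ∈ W, (∏ b ∈ mir N W, (if N + 1 - w < b then b - (N + 1 - w) else 1))
      = ∏ v ∈ W, (if v < w then w - v else 1) := by
    intro w _
    rw [prod_mir]
    refine Finset.prod_congr rfl fun v _ => ?_
    by_cases h : v < w
    · rw [if_pos (by omega), if_pos h]; ring
    · rw [if_neg (by omega), if_neg h]
  rw [Finset.prod_congr rfl e, Finset.prod_comm]

lemma Pc_insert_left {t : ℤ} {A B : Finset ℤ} (h : t ∉ A) :
    Pc (insert t A) B = (∏ b ∈ B, (b - t)) * Pc A B := by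
  rw [Pc, Finset.prod_insert h]; rfl

lemma Pc_insert_right {x : ℤ} {A B : Finset ℤ} (h : x ∉ B) :
    Pc A (insert x B) = (∏ a ∈ A, (x - a)) * Pc A B := by
  simp only [Pc, Finset.prod_insert h, Finset.prod_mul_distrib]


lemma key (N Mn : ℕ) (hNM : 2 * Mn ≤ N) (U D : Finset ℤ)
    (hU : U ⊆ Icc 1 (Mn : ℤ)) (hD : D ⊆ Icc 1 (Mn : ℤ))
    (h1 : (1 : ℤ) ∉ U ∪ D)
    (β : ℤ) (hβ : β ∈ Icc (2 : ℤ) (Mn : ℤ) \ (U ∪ D)) :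
    (Δprod (U ∪ mir N (insert 1 D)) * Δprod (insert 1 U ∪ mir N (insert β D))
      = (((N : ℤ) - β) * ((∏ u ∈ U, ((u - 1) * ((N : ℤ) - u))) *
          ∏ d ∈ D, ((d - 1) * ((N : ℤ) - d)))) *
        (Δprod (U ∪ mir N D) * Δprod (U ∪ mir N (insert β D)))) ∧
    (Δprod (insert 1 U ∪ mir N D) * Δprod (U ∪ mir N (insert 1 (insert β D)))
      = ((β - 1) * ((∏ u ∈ U, ((u - 1) * ((N : ℤ) - u))) *
          ∏ d ∈ D, ((d - 1) * ((N : ℤ) - d)))) *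
        (Δprod (U ∪ mir N D) * Δprod (U ∪ mir N (insert β D)))) := by
  have hNM' : 2 * (Mn : ℤ) ≤ (N : ℤ) := by exact_mod_cast hNM
  simp only [Finset.mem_sdiff, Finset.mem_Icc, Finset.mem_union] at hβ h1
  obtain ⟨⟨hβ2, hβM⟩, hβUD⟩ := hβ
  have h1U : (1 : ℤ) ∉ U := fun h => h1 (Or.inl h)
  have h1D : (1 : ℤ) ∉ D := fun h => h1 (Or.inr h)
  have hβU : β ∉ U := fun h => hβUD (Or.inl h)
  have hβD : β ∉ D := fun h => hβUD (Or.inr h)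
  -- membership bounds
  have hmemU : ∀ u ∈ U, 2 ≤ u ∧ u ≤ (Mn : ℤ) := fun u hu => by
    have := Finset.mem_Icc.1 (hU hu)
    constructor
    · rcases lt_or_eq_of_le this.1 with h | h
      · omega
      · exact absurd (h ▸ hu) h1U
    · exact this.2
  have hmemD : ∀ d ∈ D, 2 ≤ d ∧ d ≤ (Mn : ℤ) := fun d hd => by
    have := Finset.mem_Icc.1 (hD hd)
    constructor
    · rcases lt_or_eq_of_le this.1 with h | h
      · omega
      · exact absurd (h ▸ hd) h1D
    · exact this.2
  -- ordering lemma
  have hord : ∀ (A W : Finset ℤ), A ⊆ Icc 1 (Mn : ℤ) → W ⊆ Icc 1 (Mn : ℤ) →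
      ∀ a ∈ A, ∀ b ∈ mir N W, a < b := by
    intro A W hA hW a ha b hb
    obtain ⟨w, hw, rfl⟩ := Finset.mem_image.1 hb
    have h1 := Finset.mem_Icc.1 (hA ha)
    have h2 := Finset.mem_Icc.1 (hW hw)
    omega
  have hMn1 : (1 : ℤ) ∈ Icc 1 (Mn : ℤ) := Finset.mem_Icc.2 ⟨le_refl 1, by omega⟩
  have hβIcc : β ∈ Icc 1 (Mn : ℤ) := Finset.mem_Icc.2 ⟨by omega, hβM⟩
  have hU1 : insert 1 U ⊆ Icc 1 (Mn : ℤ) := Finset.insert_subset hMn1 hU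
  have hD1 : insert 1 D ⊆ Icc 1 (Mn : ℤ) := Finset.insert_subset hMn1 hD
  have hDβ : insert β D ⊆ Icc 1 (Mn : ℤ) := Finset.insert_subset hβIcc hD
  have hD1β : insert 1 (insert β D) ⊆ Icc 1 (Mn : ℤ) := Finset.insert_subset hMn1 hDβ
  -- nonmembership facts in mirrors
  have hNmD : (N : ℤ) ∉ mir N D := by
    intro h; obtain ⟨d, hd, hd2⟩ := Finset.mem_image.1 h
    have := hmemD d hd; omega
  have hNmβD : (N : ℤ) ∉ mir N (insert β D) := by
    intro h; obtain ⟨d, hd, hd2⟩ := Finset.mem_image.1 h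
    rcases Finset.mem_insert.1 hd with h | h
    · omega
    · have := hmemD d h; omega
  -- simple mirror-product computations
  have hprod1 : ∀ W : Finset ℤ, (∏ b ∈ mir N W, (b - 1)) = ∏ w ∈ W, ((N : ℤ) - w) := by
    intro W; rw [prod_mir]; exact Finset.prod_congr rfl fun w _ => by ring
  -- mirror of insert 1 / insert β
  have hm1D : mir N (insert 1 D) = insert (N : ℤ) (mir N D) := by
    rw [mir_insert]; norm_num
  have hm1βD : mir N (insert 1 (insert β D)) = insert (N : ℤ) (mir N (insert β D)) := by
    rw [mir_insert]; norm_num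
  -- the six expansions
  have E3 : Δprod (U ∪ mir N D) = Δprod U * Δprod D * Pc U (mir N D) := by
    rw [Δprod_union (hord U D hU hD), Δprod_mir]
  have E4 : Δprod (U ∪ mir N (insert β D))
      = Δprod U * Δprod (insert β D) * Pc U (mir N (insert β D)) := by
    rw [Δprod_union (hord U (insert β D) hU hDβ), Δprod_mir]
  have E1 : Δprod (U ∪ mir N (insert 1 D))
      = Δprod U * ((∏ d ∈ D, (d - 1)) * Δprod D) *
        ((∏ u ∈ U, ((N : ℤ) - u)) * Pc U (mir N D)) := by
    rw [Δprod_union (hord U (insert 1 D) hU hD1), Δprod_mir,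
      Δprod_insert (fun d hd => by have := hmemD d hd; omega)]
    rw [hm1D, Pc_insert_right hNmD]
  have E2 : Δprod (insert 1 U ∪ mir N (insert β D))
      = ((∏ u ∈ U, (u - 1)) * Δprod U) * Δprod (insert β D) *
        ((((N : ℤ) - β) * ∏ d ∈ D, ((N : ℤ) - d)) * Pc U (mir N (insert β D))) := by
    rw [Δprod_union (hord (insert 1 U) (insert β D) hU1 hDβ), Δprod_mir,
      Δprod_insert (fun u hu => by have := hmemU u hu; omega),
      Pc_insert_left h1U, hprod1, Finset.prod_insert hβD]
  have E5 : Δprod (insert 1 U ∪ mir N D)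
      = ((∏ u ∈ U, (u - 1)) * Δprod U) * Δprod D *
        ((∏ d ∈ D, ((N : ℤ) - d)) * Pc U (mir N D)) := by
    rw [Δprod_union (hord (insert 1 U) D hU1 hD), Δprod_mir,
      Δprod_insert (fun u hu => by have := hmemU u hu; omega),
      Pc_insert_left h1U, hprod1]
  have E6 : Δprod (U ∪ mir N (insert 1 (insert β D)))
      = Δprod U * (((β - 1) * ∏ d ∈ D, (d - 1)) * Δprod (insert β D)) *
        ((∏ u ∈ U, ((N : ℤ) - u)) * Pc U (mir N (insert β D))) := by
    rw [Δprod_union (hord U (insert 1 (insert β D)) hU hD1β), Δprod_mir,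
      Δprod_insert (fun s hs => by
        rcases Finset.mem_insert.1 hs with h | h
        · omega
        · have := hmemD s h; omega),
      Finset.prod_insert hβD, hm1βD, Pc_insert_right hNmβD]
  rw [Finset.prod_mul_distrib, Finset.prod_mul_distrib]
  constructor
  · rw [E1, E2, E3, E4]; ring
  · rw [E5, E6, E3, E4]; ring

lemma ratio_eq {a b c : ℤ} (hb : b ≠ 0) (h : a = c * b) :
    ((a : ℚ)) / ((b : ℚ)) = (c : ℚ) := by
  rw [h, Int.cast_mul, mul_div_assoc, div_self (Int.cast_ne_zero.2 hb), mul_one]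


/-- Claim 2: the two Δ-ratios in the case `1 ∉ U ∪ D`. -/
theorem stmt10 (N M : ℕ) (hN : 0 < N) (hM : 0 < M) (hNM : 2 * M ≤ N)
    (U D U' D' : Finset ℤ)
    (hU : U ⊆ Icc 1 (M : ℤ)) (hD : D ⊆ Icc 1 (M : ℤ))
    (hU' : U' ⊆ Icc 1 (M : ℤ)) (hD' : D' ⊆ Icc 1 (M : ℤ))
    (hUD : U ∪ D = U' ∪ D') (hI : U ∩ D = U' ∩ D')
    (h1 : (1 : ℤ) ∉ U ∪ D)
    (β : ℤ) (hβ : β ∈ Icc (2 : ℤ) (M : ℤ) \ (U ∪ D)) :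
    ((Δprod (U ∪ mir N (insert 1 D)) * Δprod (insert 1 U ∪ mir N (insert β D)) : ℤ) : ℚ) /
        ((Δprod (U ∪ mir N D) * Δprod (U ∪ mir N (insert β D)) : ℤ) : ℚ) =
      ((Δprod (U' ∪ mir N (insert 1 D')) * Δprod (insert 1 U' ∪ mir N (insert β D')) : ℤ) : ℚ) /
        ((Δprod (U' ∪ mir N D') * Δprod (U' ∪ mir N (insert β D')) : ℤ) : ℚ) ∧
    ((Δprod (insert 1 U ∪ mir N D) * Δprod (U ∪ mir N (insert 1 (insert β D))) : ℤ) : ℚ) /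
        ((Δprod (U ∪ mir N D) * Δprod (U ∪ mir N (insert β D)) : ℤ) : ℚ) =
      ((Δprod (insert 1 U' ∪ mir N D') * Δprod (U' ∪ mir N (insert 1 (insert β D'))) : ℤ) : ℚ) /
        ((Δprod (U' ∪ mir N D') * Δprod (U' ∪ mir N (insert β D')) : ℤ) : ℚ) := by
  have h1' : (1 : ℤ) ∉ U' ∪ D' := hUD ▸ h1
  have hβ' : β ∈ Icc (2 : ℤ) (M : ℤ) \ (U' ∪ D') := hUD ▸ hβ
  obtain ⟨k1, k2⟩ := key N M hNM U D hU hD h1 β hβ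
  obtain ⟨k1', k2'⟩ := key N M hNM U' D' hU' hD' h1' β hβ'
  have hden : Δprod (U ∪ mir N D) * Δprod (U ∪ mir N (insert β D)) ≠ 0 :=
    (mul_pos (Δprod_pos _) (Δprod_pos _)).ne'
  have hden' : Δprod (U' ∪ mir N D') * Δprod (U' ∪ mir N (insert β D')) ≠ 0 :=
    (mul_pos (Δprod_pos _) (Δprod_pos _)).ne'
  have hc : ((∏ u ∈ U, ((u - 1) * ((N : ℤ) - u))) * ∏ d ∈ D, ((d - 1) * ((N : ℤ) - d)))
      = ((∏ u ∈ U', ((u - 1) * ((N : ℤ) - u))) * ∏ d ∈ D', ((d - 1) * ((N : ℤ) - d))) := by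
    rw [← Finset.prod_union_inter, hUD, hI, Finset.prod_union_inter]
  constructor
  · rw [ratio_eq hden k1, ratio_eq hden' k1', hc]
  · rw [ratio_eq hden k2, ratio_eq hden' k2', hc]


end Shuf
end

section
/- Let x be a nonnegative integer and let U, D, B ⊆ {1,…,⌊N/2⌋} with n=|U∪D|, N=x+2n, B∩(U∪D)=∅ and 2|B| ≤ x. Write u=|U|, d=|D|, m=2n−u−d (=|UΔD|) and D̄={N+1−t : t∈D}. Then M_c(CS_{x,0}(U;D;B)) = M(T_{u+d, x+m}(U∪D̄)), i.e. the number of centrally symmetric lozenge tilings of CS_{x,0}(U;D;B) equals the number of lozenge tilings of the dented semihexagon with north side x+m, slanted sides u+d, base N, and dents at the positions of U∪D̄. -/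
open Finset

namespace Shuf

/-! ### Auxiliary lemmas for Statement 13 -/

lemma mem_mir {N w : ℤ} {W : Finset ℤ} : w ∈ mir N W ↔ N + 1 - w ∈ W := by
  simp only [mir, Finset.mem_image]
  constructor
  · rintro ⟨v, hv, rfl⟩; simpa using hv
  · intro h; exact ⟨_, h, by ring⟩

lemma mir_mir (N : ℤ) (W : Finset ℤ) : mir N (mir N W) = W := by
  ext w; simp only [mem_mir]; constructor <;> intro h <;> simpa using h

lemma card_mir (N : ℤ) (W : Finset ℤ) : (mir N W).card = W.card :=
  Finset.card_image_of_injective _ (fun x y h => by omega)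

lemma mir_union (N : ℤ) (V W : Finset ℤ) :
    mir N (V ∪ W) = mir N V ∪ mir N W := Finset.image_union _ _

lemma rot_rot (c : ℤ × ℤ) (t : Tri) : rot c (rot c t) = t := by
  obtain ⟨a, b, o⟩ := t
  simp only [rot, Bool.not_not, Prod.mk.injEq, and_true]
  omega

lemma adj_rot {c : ℤ × ℤ} {s t : Tri} (h : adj s t) : adj (rot c s) (rot c t) := by
  rcases h with ⟨hs, ht, H⟩ | ⟨hs, ht, H⟩
  · refine Or.inr ⟨by simp [rot, ht], by simp [rot, hs], ?_⟩
    rcases H with ⟨h1, h2⟩ | ⟨h1, h2⟩ | ⟨h1, h2⟩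
    · exact Or.inl ⟨by simp [rot]; omega, by simp [rot]; omega⟩
    · exact Or.inr (Or.inl ⟨by simp [rot]; omega, by simp [rot]; omega⟩)
    · exact Or.inr (Or.inr ⟨by simp [rot]; omega, by simp [rot]; omega⟩)
  · refine Or.inl ⟨by simp [rot, ht], by simp [rot, hs], ?_⟩
    rcases H with ⟨h1, h2⟩ | ⟨h1, h2⟩ | ⟨h1, h2⟩
    · exact Or.inl ⟨by simp [rot]; omega, by simp [rot]; omega⟩
    · exact Or.inr (Or.inl ⟨by simp [rot]; omega, by simp [rot]; omega⟩)
    · exact Or.inr (Or.inr ⟨by simp [rot]; omega, by simp [rot]; omega⟩)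


open Classical in
/-- Restriction of a tiling to the upper region `T`. -/
noncomputable def cutMap (T : Set Tri) (f : Tri → Tri) : Tri → Tri :=
  fun t => if t ∈ T then f t else t

open Classical in
/-- Symmetric extension of a tiling of the upper region `T`. -/
noncomputable def glueMap (c : ℤ × ℤ) (T : Set Tri) (g : Tri → Tri) : Tri → Tri :=
  fun t => if t ∈ T then g t else if rot c t ∈ T then rot c (g (rot c t)) else t


theorem aux_cs (L a : ℤ) (S : Finset ℤ) (Bar : Set (Tri × Tri))
    (ha : a = (S.card : ℤ)) (hS : S ⊆ Finset.Icc 1 L)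
    (hBar : ∀ e ∈ Bar, (0 ≤ e.1.2.1 ∧ e.2.2.1 < 0) ∨ (e.1.2.1 < 0 ∧ 0 ≤ e.2.2.1)) :
    Mc (L, 0) (HRegion L a a ↑S ↑(mir L S)) Bar = M (TRegion a (L - a) ↑S) ∅ := by
  classical
  set c : ℤ × ℤ := (L, 0) with hc
  set R : Set Tri := HRegion L a a ↑S ↑(mir L S) with hRdef
  set T : Set Tri := TRegion a (L - a) ↑S with hTdef
  have memT : ∀ t : Tri, t ∈ T ↔
      ((t.2.2 = false ∧ 0 ≤ t.2.1 ∧ t.2.1 < a ∧ 0 ≤ t.1 ∧ t.1 + t.2.1 ≤ L - 1 ∧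
        (t.2.1 = 0 → t.1 + 1 ∉ S)) ∨
       (t.2.2 = true ∧ 0 ≤ t.2.1 ∧ t.2.1 < a ∧ 0 ≤ t.1 ∧ t.1 + t.2.1 ≤ L - 2)) := by
    intro t
    simp only [hTdef, TRegion, Set.mem_setOf_eq, Finset.mem_coe]
    constructor
    · rintro (⟨h1,h2,h3,h4,h5,h6⟩|⟨h1,h2,h3,h4,h5⟩)
      · exact Or.inl ⟨h1,h2,h3,h4, by omega, h6⟩
      · exact Or.inr ⟨h1,h2,h3,h4, by omega⟩
    · rintro (⟨h1,h2,h3,h4,h5,h6⟩|⟨h1,h2,h3,h4,h5⟩)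
      · exact Or.inl ⟨h1,h2,h3,h4, by omega, h6⟩
      · exact Or.inr ⟨h1,h2,h3,h4, by omega⟩
  have memR : ∀ t : Tri, t ∈ R ↔
      ((t.2.2 = false ∧ 0 ≤ t.2.1 ∧ t.2.1 < a ∧ 0 ≤ t.1 ∧ t.1 + t.2.1 ≤ L - 1 ∧
        (t.2.1 = 0 → t.1 + 1 ∉ S)) ∨
       (t.2.2 = true ∧ 0 ≤ t.2.1 ∧ t.2.1 < a ∧ 0 ≤ t.1 ∧ t.1 + t.2.1 ≤ L - 2) ∨
       (t.2.2 = false ∧ -a ≤ t.2.1 ∧ t.2.1 ≤ -1 ∧ -t.2.1 ≤ t.1 ∧ t.1 ≤ L - 1) ∨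
       (t.2.2 = true ∧ -a ≤ t.2.1 ∧ t.2.1 ≤ -1 ∧ -t.2.1 - 1 ≤ t.1 ∧ t.1 ≤ L - 1 ∧
        (t.2.1 = -1 → t.1 + 1 ∉ mir L S))) := by
    intro t
    simp only [hRdef, HRegion, Set.mem_setOf_eq, Finset.mem_coe]
  have Tpos : ∀ t ∈ T, 0 ≤ t.2.1 := by
    intro t ht; rw [memT] at ht
    rcases ht with h | h
    · exact h.2.1
    · exact h.2.1
  have TsubR : ∀ t ∈ T, t ∈ R := by
    intro t ht; rw [memT] at ht; rw [memR]
    rcases ht with h | h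
    · exact Or.inl h
    · exact Or.inr (Or.inl h)
  have RposT : ∀ t ∈ R, 0 ≤ t.2.1 → t ∈ T := by
    intro t ht hp; rw [memR] at ht; rw [memT]
    rcases ht with h | h | ⟨_, _, h3, _⟩ | ⟨_, _, h3, _⟩
    · exact Or.inl h
    · exact Or.inr h
    · omega
    · omega
  have memT' : ∀ (p q : ℤ) (o : Bool), ((p,q,o) : Tri) ∈ T ↔
      ((o = false ∧ 0 ≤ q ∧ q < a ∧ 0 ≤ p ∧ p + q ≤ L - 1 ∧ (q = 0 → p + 1 ∉ S)) ∨
       (o = true ∧ 0 ≤ q ∧ q < a ∧ 0 ≤ p ∧ p + q ≤ L - 2)) :=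
    fun p q o => memT (p, q, o)
  have memR' : ∀ (p q : ℤ) (o : Bool), ((p,q,o) : Tri) ∈ R ↔
      ((o = false ∧ 0 ≤ q ∧ q < a ∧ 0 ≤ p ∧ p + q ≤ L - 1 ∧ (q = 0 → p + 1 ∉ S)) ∨
       (o = true ∧ 0 ≤ q ∧ q < a ∧ 0 ≤ p ∧ p + q ≤ L - 2) ∨
       (o = false ∧ -a ≤ q ∧ q ≤ -1 ∧ -q ≤ p ∧ p ≤ L - 1) ∨
       (o = true ∧ -a ≤ q ∧ q ≤ -1 ∧ -q - 1 ≤ p ∧ p ≤ L - 1 ∧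
        (q = -1 → p + 1 ∉ mir L S))) :=
    fun p q o => memR (p, q, o)
  have rot_eval : ∀ t : Tri, rot c t = (L - t.1 - 1, -t.2.1 - 1, !t.2.2) := by
    intro t
    simp only [rot, hc, Prod.mk.injEq, true_and, and_true]
    omega
  have rot_eval' : ∀ (p q : ℤ) (o : Bool), rot c (p, q, o) = (L - p - 1, -q - 1, !o) :=
    fun p q o => rot_eval (p, q, o)
  have rot_snd : ∀ t : Tri, (rot c t).2.1 = -t.2.1 - 1 := by
    intro t; rw [rot_eval]
  have rotT_mem : ∀ t ∈ T, rot c t ∈ R := by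
    intro t ht
    obtain ⟨p, q, o⟩ := t
    rw [memT'] at ht
    rw [rot_eval']
    rcases ht with ⟨h1, h2, h3, h4, h5, h6⟩ | ⟨h1, h2, h3, h4, h5⟩
    · subst h1
      rw [memR']
      refine Or.inr (Or.inr (Or.inr ⟨rfl, by omega, by omega, by omega, by omega, ?_⟩))
      intro hb hmem
      rw [mem_mir] at hmem
      have he : L + 1 - (L - p - 1 + 1) = p + 1 := by omega
      rw [he] at hmem
      exact h6 (by omega) hmem
    · subst h1
      rw [memR']
      exact Or.inr (Or.inr (Or.inl ⟨rfl, by omega, by omega, by omega, by omega⟩))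
  have rotR_neg : ∀ t ∈ R, t.2.1 < 0 → rot c t ∈ T := by
    intro t ht hneg
    obtain ⟨p, q, o⟩ := t
    rw [memR'] at ht
    rw [rot_eval']
    have hneg' : q < 0 := hneg
    rcases ht with ⟨_, h2, _⟩ | ⟨_, h2, _⟩ | ⟨h1, h2, h3, h4, h5⟩ | ⟨h1, h2, h3, h4, h5, h6⟩
    · exact absurd hneg' (by omega)
    · exact absurd hneg' (by omega)
    · subst h1
      rw [memT']
      exact Or.inr ⟨rfl, by omega, by omega, by omega, by omega⟩
    · subst h1
      rw [memT']
      refine Or.inl ⟨rfl, by omega, by omega, by omega, by omega, ?_⟩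
      intro hb hmem
      refine h6 (by omega) ?_
      rw [mem_mir]
      have he : L + 1 - (p + 1) = L - p - 1 + 1 := by omega
      rw [he]
      exact hmem
  have Tbound : ∀ (p q : ℤ) (o : Bool), ((p,q,o) : Tri) ∈ T →
      0 ≤ p ∧ p ≤ L - 1 ∧ 0 ≤ q ∧ q ≤ a - 1 := by
    intro p q o h
    rw [memT'] at h
    rcases h with ⟨_, h2, h3, h4, h5, _⟩ | ⟨_, h2, h3, h4, h5⟩ <;>
      exact ⟨by omega, by omega, by omega, by omega⟩
  -- the finite sets of up- and down-pointing triangles of `T`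
  set UpF : Finset Tri :=
    (Finset.Icc 0 (L-1) ×ˢ Finset.Icc 0 (a-1) ×ˢ ({false} : Finset Bool)).filter
      (fun t => t ∈ T) with hUpF
  set DnF : Finset Tri :=
    (Finset.Icc 0 (L-1) ×ˢ Finset.Icc 0 (a-1) ×ˢ ({true} : Finset Bool)).filter
      (fun t => t ∈ T) with hDnF
  have memUpF : ∀ t : Tri, t ∈ UpF ↔ t ∈ T ∧ t.2.2 = false := by
    intro t
    rw [hUpF, Finset.mem_filter]
    constructor
    · rintro ⟨hm, hT⟩
      rw [Finset.mem_product] at hm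
      have h2 := hm.2
      rw [Finset.mem_product] at h2
      exact ⟨hT, Finset.mem_singleton.mp h2.2⟩
    · rintro ⟨hT, ho⟩
      refine ⟨?_, hT⟩
      rw [Finset.mem_product]
      obtain ⟨p, q, o⟩ := t
      obtain ⟨b1, b2, b3, b4⟩ := Tbound p q o hT
      refine ⟨Finset.mem_Icc.mpr ⟨b1, b2⟩, ?_⟩
      rw [Finset.mem_product]
      exact ⟨Finset.mem_Icc.mpr ⟨b3, b4⟩, Finset.mem_singleton.mpr ho⟩
  have memDnF : ∀ t : Tri, t ∈ DnF ↔ t ∈ T ∧ t.2.2 = true := by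
    intro t
    rw [hDnF, Finset.mem_filter]
    constructor
    · rintro ⟨hm, hT⟩
      rw [Finset.mem_product] at hm
      have h2 := hm.2
      rw [Finset.mem_product] at h2
      exact ⟨hT, Finset.mem_singleton.mp h2.2⟩
    · rintro ⟨hT, ho⟩
      refine ⟨?_, hT⟩
      rw [Finset.mem_product]
      obtain ⟨p, q, o⟩ := t
      obtain ⟨b1, b2, b3, b4⟩ := Tbound p q o hT
      refine ⟨Finset.mem_Icc.mpr ⟨b1, b2⟩, ?_⟩
      rw [Finset.mem_product]
      exact ⟨Finset.mem_Icc.mpr ⟨b3, b4⟩, Finset.mem_singleton.mpr ho⟩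
  set I : Finset ℤ := Finset.Icc 0 (a - 1) with hI
  have haL : ∀ b ∈ I, 1 ≤ L ∧ a ≤ L := by
    intro b hb
    rw [hI, Finset.mem_Icc] at hb
    have ha1 : 1 ≤ a := by omega
    have hScard : 1 ≤ (S.card : ℤ) := by omega
    have hne : S.Nonempty := Finset.card_pos.mp (by exact_mod_cast hScard)
    obtain ⟨s0, hs0⟩ := hne
    have hmem := hS hs0
    rw [Finset.mem_Icc] at hmem
    have hle : S.card ≤ (Finset.Icc 1 L).card := Finset.card_le_card hS
    rw [Int.card_Icc] at hle
    omega
  have upfiber : ∀ b ∈ I, UpF.filter (fun t => t.2.1 = b) =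
      ((Finset.Icc 0 (L-1-b)).filter (fun p => ¬(b = 0 ∧ p + 1 ∈ S))).image
        (fun p => ((p, b, false) : Tri)) := by
    intro b hb
    rw [hI, Finset.mem_Icc] at hb
    ext t
    obtain ⟨p, q, o⟩ := t
    rw [Finset.mem_filter, memUpF, memT', Finset.mem_image]
    constructor
    · rintro ⟨⟨hT, ho⟩, hq⟩
      have hq' : q = b := hq
      subst hq'
      have ho' : o = false := ho
      subst ho'
      rcases hT with ⟨_, h2, h3, h4, h5, h6⟩ | ⟨hcontr, _⟩
      · refine ⟨p, Finset.mem_filter.mpr ⟨Finset.mem_Icc.mpr ⟨h4, by omega⟩, ?_⟩, rfl⟩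
        rintro ⟨hb0, hmem⟩
        exact h6 hb0 hmem
      · exact absurd hcontr (by simp)
    · rintro ⟨x, hx, heq⟩
      rw [Finset.mem_filter, Finset.mem_Icc] at hx
      obtain ⟨⟨hx0, hx1⟩, hdent⟩ := hx
      rw [Prod.mk.injEq, Prod.mk.injEq] at heq
      obtain ⟨rfl, rfl, rfl⟩ := heq
      refine ⟨⟨Or.inl ⟨rfl, by omega, by omega, by omega, by omega, ?_⟩, rfl⟩, rfl⟩
      intro h0 hmem
      exact hdent ⟨h0, hmem⟩
  have dnfiber : ∀ b ∈ I, DnF.filter (fun t => t.2.1 = b) =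
      (Finset.Icc 0 (L-2-b)).image (fun p => ((p, b, true) : Tri)) := by
    intro b hb
    rw [hI, Finset.mem_Icc] at hb
    ext t
    obtain ⟨p, q, o⟩ := t
    rw [Finset.mem_filter, memDnF, memT', Finset.mem_image]
    constructor
    · rintro ⟨⟨hT, ho⟩, hq⟩
      have hq' : q = b := hq
      subst hq'
      have ho' : o = true := ho
      subst ho'
      rcases hT with ⟨hcontr, _⟩ | ⟨_, h2, h3, h4, h5⟩
      · exact absurd hcontr (by simp)
      · exact ⟨p, Finset.mem_Icc.mpr ⟨h4, by omega⟩, rfl⟩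
    · rintro ⟨x, hx, heq⟩
      rw [Finset.mem_Icc] at hx
      rw [Prod.mk.injEq, Prod.mk.injEq] at heq
      obtain ⟨rfl, rfl, rfl⟩ := heq
      exact ⟨⟨Or.inr ⟨rfl, by omega, by omega, by omega, by omega⟩, rfl⟩, rfl⟩
  have upfibercard : ∀ b ∈ I,
      (((UpF.filter (fun t => t.2.1 = b)).card : ℤ)) = (L - b) - (if b = 0 then a else 0) := by
    intro b hb
    obtain ⟨hL1, haL'⟩ := haL b hb
    have hbI := hb
    rw [hI, Finset.mem_Icc] at hbI
    rw [upfiber b hb,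
      Finset.card_image_of_injective _ (fun x y h => congrArg Prod.fst h)]
    by_cases hb0 : b = 0
    · subst hb0
      rw [if_pos rfl]
      have hset : (Finset.Icc (0:ℤ) (L-1-0)).filter (fun p => ¬((0:ℤ) = 0 ∧ p + 1 ∈ S)) =
          Finset.Icc (0:ℤ) (L-1) \ S.image (fun s => s - 1) := by
        ext p
        simp only [Finset.mem_filter, Finset.mem_sdiff, Finset.mem_Icc, Finset.mem_image,
          not_and, not_exists]
        constructor
        · rintro ⟨⟨h1, h2⟩, h3⟩
          refine ⟨⟨h1, by omega⟩, ?_⟩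
          intro s0 hs0 hsp
          exact (h3 trivial) (by rw [show p + 1 = s0 by omega]; exact hs0)
        · rintro ⟨⟨h1, h2⟩, h3⟩
          refine ⟨⟨h1, by omega⟩, ?_⟩
          intro _ hmem
          exact h3 (p + 1) hmem (by omega)
      rw [hset]
      have hsub : S.image (fun s => s - 1) ⊆ Finset.Icc (0:ℤ) (L-1) := by
        intro p hp
        rw [Finset.mem_image] at hp
        obtain ⟨s0, hs0, rfl⟩ := hp
        have := hS hs0
        rw [Finset.mem_Icc] at this ⊢
        omega
      rw [Finset.card_sdiff_of_subset hsub,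
        Finset.card_image_of_injective _ (fun x y h => by simpa using h : Function.Injective (fun s : ℤ => s - 1))]
      have hcle : S.card ≤ (Finset.Icc (0:ℤ) (L-1)).card := by
        calc S.card = (S.image (fun s => s - 1)).card :=
              (Finset.card_image_of_injective _ (fun x y h => by simpa using h : Function.Injective (fun s : ℤ => s - 1))).symm
          _ ≤ _ := Finset.card_le_card hsub
      rw [Int.card_Icc] at hcle ⊢
      push_cast [Nat.cast_sub hcle]
      omega
    · rw [if_neg hb0]
      rw [Finset.filter_true_of_mem (fun p _ => by rintro ⟨h0, _⟩; exact hb0 h0)]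
      rw [Int.card_Icc]
      omega
  have dnfibercard : ∀ b ∈ I,
      (((DnF.filter (fun t => t.2.1 = b)).card : ℤ)) = L - 1 - b := by
    intro b hb
    obtain ⟨hL1, haL'⟩ := haL b hb
    have hbI := hb
    rw [hI, Finset.mem_Icc] at hbI
    rw [dnfiber b hb,
      Finset.card_image_of_injective _ (fun x y h => congrArg Prod.fst h),
      Int.card_Icc]
    omega
  have cardeq : UpF.card = DnF.card := by
    have h1 : UpF.card = ∑ b ∈ I, (UpF.filter (fun t => t.2.1 = b)).card := by
      refine Finset.card_eq_sum_card_fiberwise ?_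
      intro t ht
      rw [Finset.mem_coe, memUpF] at ht
      obtain ⟨p, q, o⟩ := t
      obtain ⟨_, _, b3, b4⟩ := Tbound p q o ht.1
      rw [hI]
      exact Finset.mem_Icc.mpr ⟨b3, b4⟩
    have h2 : DnF.card = ∑ b ∈ I, (DnF.filter (fun t => t.2.1 = b)).card := by
      refine Finset.card_eq_sum_card_fiberwise ?_
      intro t ht
      rw [Finset.mem_coe, memDnF] at ht
      obtain ⟨p, q, o⟩ := t
      obtain ⟨_, _, b3, b4⟩ := Tbound p q o ht.1
      rw [hI]
      exact Finset.mem_Icc.mpr ⟨b3, b4⟩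
    have hz : ((UpF.card : ℤ)) = (DnF.card : ℤ) := by
      rw [h1, h2]
      push_cast
      rw [Finset.sum_congr rfl upfibercard, Finset.sum_congr rfl dnfibercard]
      rw [Finset.sum_sub_distrib]
      have hite : (∑ b ∈ I, (if b = 0 then a else 0)) = if (0:ℤ) ∈ I then a else 0 :=
        Finset.sum_ite_eq' I (0:ℤ) (fun _ => a)
      rw [hite]
      have hIcard : ((I.card : ℤ)) = a := by
        have ha0 : 0 ≤ a := by have := S.card.zero_le; omega
        rw [hI, Int.card_Icc]
        omega
      have e1 : (∑ b ∈ I, ((L:ℤ) - b)) = (∑ b ∈ I, ((L - 1 - b) + 1)) :=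
        Finset.sum_congr rfl (fun b _ => by ring)
      rw [e1, Finset.sum_add_distrib, Finset.sum_const, nsmul_eq_mul]
      have heta : I.sum (HSub.hSub (L - 1)) = ∑ x ∈ I, (L - 1 - x) := rfl
      by_cases h0 : (0:ℤ) ∈ I
      · rw [if_pos h0]
        omega
      · rw [if_neg h0]
        have : a ≤ 0 := by
          by_contra hcon
          exact h0 (by rw [hI]; exact Finset.mem_Icc.mpr ⟨le_refl 0, by omega⟩)
        have ha0 : 0 ≤ a := by have := S.card.zero_le; omega
        have haz : a = 0 := by omega
        have : I = ∅ := by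
          rw [hI]
          apply Finset.Icc_eq_empty
          omega
        rw [this]
        simp
    exact_mod_cast hz
  -- the no-crossing lemma: tilings of `R` stay within `T` on `T`
  have nocross : ∀ f : Tri → Tri, IsTiling R Bar f → ∀ t ∈ T, f t ∈ T := by
    intro f hf
    have hmapped : ∀ t ∈ DnF, f t ∈ UpF := by
      intro t ht
      rw [memDnF] at ht
      obtain ⟨htT, hto⟩ := ht
      obtain ⟨hfR, hadj, hff, -, -⟩ := hf.2 t (TsubR t htT)
      rcases hadj with ⟨h1, _, _⟩ | ⟨h1, h2, hoff⟩
      · rw [hto] at h1; exact absurd h1 (by simp)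
      · have htpos := Tpos t htT
        have hpos : 0 ≤ (f t).2.1 := by
          rcases hoff with ⟨_, h⟩ | ⟨_, h⟩ | ⟨_, h⟩ <;> omega
        rw [memUpF]
        exact ⟨RposT (f t) hfR hpos, h1⟩
    have himage : DnF.image f = UpF := by
      apply Finset.eq_of_subset_of_card_le
      · intro s hs
        rw [Finset.mem_image] at hs
        obtain ⟨t, ht, rfl⟩ := hs
        exact hmapped t ht
      · have hinj : Set.InjOn f ↑DnF := by
          intro t1 h1 t2 h2 heq
          have h1' : t1 ∈ DnF := h1
          have h2' : t2 ∈ DnF := h2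
          have e1 : f (f t1) = t1 := (hf.2 t1 (TsubR t1 ((memDnF t1).mp h1').1)).2.2.1
          have e2 : f (f t2) = t2 := (hf.2 t2 (TsubR t2 ((memDnF t2).mp h2').1)).2.2.1
          rw [← e1, ← e2, heq]
        rw [Finset.card_image_of_injOn hinj]
        exact le_of_eq cardeq
    intro t ht
    by_cases ho : t.2.2 = true
    · have : t ∈ DnF := (memDnF t).mpr ⟨ht, ho⟩
      exact ((memUpF (f t)).mp (hmapped t this)).1
    · have hfalse : t.2.2 = false := by revert ho; cases t.2.2 <;> simp
      have hmem : t ∈ UpF := (memUpF t).mpr ⟨ht, hfalse⟩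
      rw [← himage, Finset.mem_image] at hmem
      obtain ⟨d, hd, hfd⟩ := hmem
      have e : f (f d) = d := (hf.2 d (TsubR d ((memDnF d).mp hd).1)).2.2.1
      rw [← hfd, e]
      exact ((memDnF d).mp hd).1
  -- forward: cutting a symmetric tiling of `R` to a tiling of `T`
  have fwd_tiling : ∀ f : Tri → Tri, IsTiling R Bar f → IsTiling T ∅ (cutMap T f) := by
    intro f hf
    constructor
    · intro t ht
      simp [cutMap, ht]
    · intro t ht
      have hfT : f t ∈ T := nocross f hf t ht
      have e : cutMap T f t = f t := by simp [cutMap, ht]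
      rw [e]
      refine ⟨hfT, (hf.2 t (TsubR t ht)).2.1, ?_, by simp, by simp⟩
      have e2 : cutMap T f (f t) = f (f t) := by simp [cutMap, hfT]
      rw [e2]
      exact (hf.2 t (TsubR t ht)).2.2.1
  have TnotT : ∀ t ∈ T, rot c t ∉ T := by
    intro t ht hcon
    have h1 := Tpos t ht
    have h2 := Tpos _ hcon
    rw [rot_snd] at h2
    omega
  have notR : ∀ t : Tri, t ∉ T → rot c t ∉ T → t ∉ R := by
    intro t h1 h2 hR
    by_cases hsig : 0 ≤ t.2.1
    · exact h1 (RposT t hR hsig)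
    · exact h2 (rotR_neg t hR (by omega))
  -- backward: gluing a tiling of `T` to a symmetric tiling of `R`
  have bwd_tiling : ∀ g : Tri → Tri, IsTiling T ∅ g → IsTiling R Bar (glueMap c T g) := by
    intro g hg
    have hgT : ∀ t ∈ T, g t ∈ T := fun t ht => (hg.2 t ht).1
    have hgg : ∀ t ∈ T, g (g t) = t := fun t ht => (hg.2 t ht).2.2.1
    constructor
    · intro t htR
      have h1 : t ∉ T := fun h => htR (TsubR t h)
      have h2 : rot c t ∉ T := by
        intro h
        refine htR ?_
        have := rotT_mem _ h
        rwa [rot_rot] at this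
      simp [glueMap, h1, h2]
    · intro t htR
      by_cases hsign : 0 ≤ t.2.1
      · have htT : t ∈ T := RposT t htR hsign
        have e : glueMap c T g t = g t := by simp [glueMap, htT]
        rw [e]
        have hgtT := hgT t htT
        have e2 : glueMap c T g (g t) = g (g t) := by simp [glueMap, hgtT]
        refine ⟨TsubR _ hgtT, (hg.2 t htT).2.1, by rw [e2]; exact hgg t htT, ?_, ?_⟩
        · intro hmem
          rcases hBar _ hmem with ⟨_, hneg⟩ | ⟨hneg, _⟩
          · have hneg' : (g t).2.1 < 0 := hneg
            exact absurd hneg' (by have := Tpos _ hgtT; omega)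
          · have hneg' : t.2.1 < 0 := hneg
            exact absurd hneg' (by omega)
        · intro hmem
          rcases hBar _ hmem with ⟨_, hneg⟩ | ⟨hneg, _⟩
          · have hneg' : t.2.1 < 0 := hneg
            exact absurd hneg' (by omega)
          · have hneg' : (g t).2.1 < 0 := hneg
            exact absurd hneg' (by have := Tpos _ hgtT; omega)
      · push_neg at hsign
        have h1 : t ∉ T := fun h => absurd (Tpos t h) (by omega)
        have h2 : rot c t ∈ T := rotR_neg t htR (by omega)
        have e : glueMap c T g t = rot c (g (rot c t)) := by simp [glueMap, h1, h2]
        have hsT : g (rot c t) ∈ T := hgT _ h2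
        have hrsR : rot c (g (rot c t)) ∈ R := rotT_mem _ hsT
        have hrs_neg : (rot c (g (rot c t))).2.1 < 0 := by
          rw [rot_snd]
          have := Tpos _ hsT
          omega
        have hrsnotT : rot c (g (rot c t)) ∉ T := TnotT _ hsT
        have hback : rot c (rot c (g (rot c t))) ∈ T := by rw [rot_rot]; exact hsT
        have e3 : glueMap c T g (rot c (g (rot c t))) = t := by
          have step : glueMap c T g (rot c (g (rot c t))) =
              rot c (g (rot c (rot c (g (rot c t))))) := by
            simp [glueMap, hrsnotT, hback]
          rw [step, rot_rot, hgg _ h2, rot_rot]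
        refine ⟨?_, ?_, ?_, ?_, ?_⟩
        · rw [e]; exact hrsR
        · rw [e]
          have hadj : adj (rot c t) (g (rot c t)) := (hg.2 _ h2).2.1
          have := adj_rot (c := c) hadj
          rwa [rot_rot] at this
        · rw [e, e3]
        · rw [e]
          intro hmem
          rcases hBar _ hmem with ⟨hneg, _⟩ | ⟨_, hneg⟩
          · have hneg' : 0 ≤ t.2.1 := hneg
            exact absurd hneg' (by omega)
          · have hneg' : 0 ≤ (rot c (g (rot c t))).2.1 := hneg
            rw [rot_snd] at hneg'
            have := Tpos _ hsT
            exact absurd hneg' (by omega)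
        · rw [e]
          intro hmem
          rcases hBar _ hmem with ⟨hneg, _⟩ | ⟨_, hneg⟩
          · have hneg' : 0 ≤ (rot c (g (rot c t))).2.1 := hneg
            rw [rot_snd] at hneg'
            have := Tpos _ hsT
            exact absurd hneg' (by omega)
          · have hneg' : 0 ≤ t.2.1 := hneg
            exact absurd hneg' (by omega)
  have bwd_sym : ∀ g : Tri → Tri, IsTiling T ∅ g →
      ∀ t, glueMap c T g (rot c t) = rot c (glueMap c T g t) := by
    intro g hg t
    by_cases h1 : t ∈ T
    · have hrt : rot c t ∉ T := TnotT t h1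
      have hback : rot c (rot c t) ∈ T := by rw [rot_rot]; exact h1
      have step : glueMap c T g (rot c t) = rot c (g (rot c (rot c t))) := by
        simp [glueMap, hrt, hback]
      rw [step, rot_rot]
      have : glueMap c T g t = g t := by simp [glueMap, h1]
      rw [this]
    · by_cases h2 : rot c t ∈ T
      · have step : glueMap c T g (rot c t) = g (rot c t) := by simp [glueMap, h2]
        have step2 : glueMap c T g t = rot c (g (rot c t)) := by simp [glueMap, h1, h2]
        rw [step, step2, rot_rot]
      · have hback : rot c (rot c t) ∉ T := by rw [rot_rot]; exact h1
        have step : glueMap c T g (rot c t) = rot c t := by simp [glueMap, h2, hback]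
        have step2 : glueMap c T g t = t := by simp [glueMap, h1, h2]
        rw [step, step2]
  -- assemble the bijection
  apply Nat.card_congr
  refine
    { toFun := fun F => ⟨cutMap T F.1, fwd_tiling F.1 F.2.1⟩
      invFun := fun G => ⟨glueMap c T G.1, bwd_tiling G.1 G.2, bwd_sym G.1 G.2⟩
      left_inv := ?_
      right_inv := ?_ }
  · rintro ⟨f, hf, hsym⟩
    apply Subtype.ext
    funext t
    show glueMap c T (cutMap T f) t = f t
    by_cases h1 : t ∈ T
    · simp [glueMap, cutMap, h1]
    · by_cases h2 : rot c t ∈ T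
      · have e1 : cutMap T f (rot c t) = f (rot c t) := by simp [cutMap, h2]
        have step : glueMap c T (cutMap T f) t = rot c (cutMap T f (rot c t)) := by
          simp [glueMap, h1, h2]
        rw [step, e1, hsym t, rot_rot]
      · have htR : t ∉ R := notR t h1 h2
        have : glueMap c T (cutMap T f) t = t := by simp [glueMap, h1, h2]
        rw [this, hf.1 t htR]
  · rintro ⟨g, hg⟩
    apply Subtype.ext
    funext t
    show cutMap T (glueMap c T g) t = g t
    by_cases h1 : t ∈ T
    · simp [cutMap, glueMap, h1]
    · have e1 : cutMap T (glueMap c T g) t = t := by simp [cutMap, h1]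
      rw [e1, hg.1 t h1]

/-- base case `y = 0`. -/
theorem stmt13 (x : ℕ) (U D B : Finset ℤ)
    (n : ℕ) (hn : n = (U ∪ D).card) (N : ℕ) (hN : N = x + 2 * n)
    (m : ℕ) (hm : m = 2 * n - U.card - D.card)
    (hU : U ⊆ Icc 1 ((N / 2 : ℕ) : ℤ)) (hD : D ⊆ Icc 1 ((N / 2 : ℕ) : ℤ))
    (hB : B ⊆ Icc 1 ((N / 2 : ℕ) : ℤ))
    (hBd : B ∩ (U ∪ D) = ∅) (hBcard : 2 * B.card ≤ x) :
    McCS x 0 U D B =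
      MT ((U.card + D.card : ℕ) : ℤ) ((x + m : ℕ) : ℤ) (U ∪ mir (N : ℤ) D) := by
  have hun : U.card ≤ n := hn ▸ Finset.card_le_card Finset.subset_union_left
  have hdn : D.card ≤ n := hn ▸ Finset.card_le_card Finset.subset_union_right
  have hNz : ((x:ℤ) + ((0:ℕ):ℤ) + 2 * ((U ∪ D).card : ℤ)) = (N:ℤ) := by
    push_cast
    omega
  simp only [McCS, MT]
  rw [hNz]
  have hdisj1 : Disjoint U (mir (N:ℤ) D) := by
    rw [Finset.disjoint_left]
    intro w hw hw2
    have h1 := hU hw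
    rw [Finset.mem_Icc] at h1
    rw [mem_mir] at hw2
    have h2 := hD hw2
    rw [Finset.mem_Icc] at h2
    omega
  have hcardS : (U ∪ mir (N:ℤ) D).card = U.card + D.card := by
    rw [Finset.card_union_of_disjoint hdisj1, card_mir]
  have hD'eq : D ∪ mir (N:ℤ) U = mir (N:ℤ) (U ∪ mir (N:ℤ) D) := by
    rw [mir_union, mir_mir, Finset.union_comm]
  rw [hD'eq]
  have hseteq2 : U ∪ mir (N:ℤ) D ∪ mir (N:ℤ) (U ∪ mir (N:ℤ) D) =
      (U ∪ D) ∪ mir (N:ℤ) (U ∪ D) := by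
    rw [mir_union, mir_mir, mir_union]
    ext w
    simp only [Finset.mem_union]
    tauto
  have hdisj2 : Disjoint (U ∪ D) (mir (N:ℤ) (U ∪ D)) := by
    rw [Finset.disjoint_left]
    intro w hw hw2
    rw [mem_mir] at hw2
    have h1 : w ∈ Finset.Icc 1 (((N/2 : ℕ)):ℤ) := by
      rcases Finset.mem_union.mp hw with h | h
      · exact hU h
      · exact hD h
    have h2 : (N:ℤ) + 1 - w ∈ Finset.Icc 1 (((N/2 : ℕ)):ℤ) := by
      rcases Finset.mem_union.mp hw2 with h | h
      · exact hU h
      · exact hD h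
    rw [Finset.mem_Icc] at h1 h2
    omega
  have hcardUn : ((U ∪ D) ∪ mir (N:ℤ) (U ∪ D)).card = 2 * n := by
    rw [Finset.card_union_of_disjoint hdisj2, card_mir]
    omega
  rw [hseteq2, hcardUn, card_mir, hcardS]
  have e1 : ((x:ℤ) + ((0:ℕ):ℤ) + ((2*n : ℕ):ℤ)) = (N:ℤ) := by push_cast; omega
  have e2 : (((0:ℕ):ℤ) + ((U.card + D.card : ℕ):ℤ)) = ((U.card + D.card : ℕ):ℤ) := by
    push_cast; ring
  rw [e1, e2]
  have e3 : ((x + m : ℕ):ℤ) = (N:ℤ) - ((U.card + D.card : ℕ):ℤ) := by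
    push_cast; omega
  rw [e3]
  have hSsub : U ∪ mir (N:ℤ) D ⊆ Finset.Icc 1 (N:ℤ) := by
    intro w hw
    rw [Finset.mem_Icc]
    rcases Finset.mem_union.mp hw with h | h
    · have h1 := hU h; rw [Finset.mem_Icc] at h1; omega
    · rw [mem_mir] at h
      have h1 := hD h; rw [Finset.mem_Icc] at h1; omega
  have hbar : ∀ e ∈ HBar ↑(B ∪ mir (N:ℤ) B),
      (0 ≤ e.1.2.1 ∧ e.2.2.1 < 0) ∨ (e.1.2.1 < 0 ∧ 0 ≤ e.2.2.1) := by
    rintro e ⟨i, hi, h | h⟩ <;> subst h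
    · exact Or.inl ⟨le_refl 0, show (-1:ℤ) < 0 by norm_num⟩
    · exact Or.inr ⟨show (-1:ℤ) < 0 by norm_num, le_refl 0⟩
  exact aux_cs (N:ℤ) ((U.card + D.card : ℕ):ℤ) (U ∪ mir (N:ℤ) D) _
    (by rw [hcardS]) hSsub hbar

end Shuf
end
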